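/- arXiv:2309.02701 — 4 statements merged into one kernel-verified Lean document; each statement's English description precedes it below -/
import Mathlib

section
/- Pseudospectrum inclusion via rank-one perturbations: Let H be a complex Hilbert space, A a bounded linear operator on H, ε > 0, and z ∈ ℂ with z not in the spectrum of A and ‖(z − A)⁻¹‖ > 1/ε. Then there exists a bounded linear operator K on H whose range has dimension at most one, with ‖K‖ < ε, such that z is an eigenvalue of A + K; in particular z lies in the spectrum of A + K. -/
/-- Pseudospectrum inclusion via rank-one perturbations: if `z ∉ spectrum A` and
`‖(z - A)⁻¹‖ > 1/ε`, then there is a rank-one operator `K` with `‖K‖ < ε` such that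
`z` is an eigenvalue of `A + K`; in particular `z ∈ spectrum (A + K)`. -/
theorem pseudospectrum_rank_one_perturbation
    {H : Type*} [NormedAddCommGroup H] [InnerProductSpace ℂ H] [CompleteSpace H]
    (A : H →L[ℂ] H) (ε : ℝ) (hε : 0 < ε) (z : ℂ) (hz : z ∉ spectrum ℂ A)
    (hres : 1 / ε < ‖Ring.inverse (z • (1 : H →L[ℂ] H) - A)‖) :
    ∃ K : H →L[ℂ] H,
      Module.rank ℂ (LinearMap.range (K : H →ₗ[ℂ] H)) ≤ 1 ∧
      ‖K‖ < ε ∧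
      (∃ v : H, v ≠ 0 ∧ (A + K) v = z • v) ∧
      z ∈ spectrum ℂ (A + K) := by
  set T : H →L[ℂ] H := z • (1 : H →L[ℂ] H) - A with hTdef
  have hT : IsUnit T := by
    have := spectrum.notMem_iff.mp hz
    rwa [Algebra.algebraMap_eq_smul_one] at this
  set R : H →L[ℂ] H := Ring.inverse T with hRdef
  have hmul : T * R = 1 := Ring.mul_inverse_cancel T hT
  obtain ⟨x, hx⟩ : ∃ x : H, (1 / ε) * ‖x‖ < ‖R x‖ := by
    by_contra h
    push_neg at h
    exact absurd (ContinuousLinearMap.opNorm_le_bound R (by positivity) h) (not_le.mpr hres)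
  have hx0 : x ≠ 0 := by
    rintro rfl
    simp at hx
  set v : H := R x with hvdef
  have hTv : T v = x := by
    have : (T * R) x = (1 : H →L[ℂ] H) x := by rw [hmul]
    simpa [ContinuousLinearMap.mul_apply] using this
  have hxpos : 0 < ‖x‖ := norm_pos_iff.mpr hx0
  have hv : 0 < ‖v‖ := lt_of_le_of_lt (by positivity) hx
  have hv0 : v ≠ 0 := norm_pos_iff.mp hv
  set K : H →L[ℂ] H := ((‖v‖ : ℂ) ^ 2)⁻¹ • (innerSL ℂ v).smulRight x with hKdef
  have hKapp : ∀ y : H, K y = (((‖v‖ : ℂ) ^ 2)⁻¹ * inner ℂ v y) • x := by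
    intro y
    simp [hKdef, ContinuousLinearMap.smul_apply, ContinuousLinearMap.smulRight_apply,
      innerSL_apply_apply, smul_smul]
  have hvv : (inner ℂ v v : ℂ) = (‖v‖ : ℂ) ^ 2 := by
    exact_mod_cast inner_self_eq_norm_sq_to_K (𝕜 := ℂ) v
  have hKv : K v = x := by
    rw [hKapp v, hvv,
      inv_mul_cancel₀ (pow_ne_zero 2 (Complex.ofReal_ne_zero.mpr hv.ne')), one_smul]
  have hAv : A v = z • v - x := by
    have h1 : z • v - A v = x := by
      have := hTv
      simpa [hTdef, ContinuousLinearMap.sub_apply, ContinuousLinearMap.smul_apply,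
        ContinuousLinearMap.one_apply] using this
    rw [eq_sub_iff_add_eq, ← h1]; abel
  have heig : (A + K) v = z • v := by
    rw [ContinuousLinearMap.add_apply, hAv, hKv]; abel
  refine ⟨K, ?_, ?_, ⟨v, hv0, heig⟩, ?_⟩
  · -- rank ≤ 1
    have hle : LinearMap.range (K : H →ₗ[ℂ] H) ≤ Submodule.span ℂ {x} := by
      rintro w ⟨y, rfl⟩
      rw [ContinuousLinearMap.coe_coe, hKapp y]
      exact Submodule.smul_mem _ _ (Submodule.mem_span_singleton_self x)
    calc Module.rank ℂ (LinearMap.range (K : H →ₗ[ℂ] H)) ≤ Module.rank ℂ (Submodule.span ℂ {x}) :=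
          Submodule.rank_mono hle
      _ ≤ 1 := by simpa using rank_span_le (R := ℂ) ({x} : Set H)
  · -- norm < ε
    have hnorm : ‖K‖ = ‖x‖ / ‖v‖ := by
      rw [hKdef, norm_smul, ContinuousLinearMap.norm_smulRight_apply, innerSL_apply_norm,
        norm_inv, norm_pow, Complex.norm_real, Real.norm_eq_abs, abs_of_nonneg hv.le]
      field_simp
    rw [hnorm, div_lt_iff₀ hv]
    calc ‖x‖ = ε * ((1 / ε) * ‖x‖) := by field_simp
      _ < ε * ‖v‖ := by exact mul_lt_mul_of_pos_left hx hε
  · -- spectrum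
    rw [spectrum.mem_iff]
    intro hu
    obtain ⟨U, hU⟩ := hu
    have h1 : (algebraMap ℂ (H →L[ℂ] H) z - (A + K)) v = 0 := by
      rw [Algebra.algebraMap_eq_smul_one]
      simp [ContinuousLinearMap.sub_apply, ContinuousLinearMap.smul_apply,
        ContinuousLinearMap.one_apply, heig]
    have h2 : ((↑U⁻¹ : H →L[ℂ] H)) (((↑U : H →L[ℂ] H)) v) = v := by
      rw [← ContinuousLinearMap.mul_apply, U.inv_mul, ContinuousLinearMap.one_apply]
    rw [hU, h1, map_zero] at h2
    exact hv0 h2.symm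
end

section
/- Spectrum of the chiral block Hamiltonian: Let H₁ and H₂ be complex Hilbert spaces, D : H₁ → H₂ a bounded linear operator with Hilbert-space adjoint D†, and m ∈ ℝ. Define the bounded operator H on the Hilbert space H₁ × H₂ by H(φ₁, φ₂) := (m·φ₁ + D†φ₂, D·φ₁ − m·φ₂). Then: (i) H is self-adjoint; (ii) H ∘ H equals the block-diagonal operator (D†∘D + m²·Id) ⊕ (D∘D† + m²·Id) on H₁ × H₂; and (iii) { E² : E ∈ spectrum(H) } = { μ + m² : μ ∈ spectrum(D†∘D) ∪ spectrum(D∘D†) }. -/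
open ContinuousLinearMap Pointwise

/-- Spectrum of a block-diagonal operator is the union of the spectra of the blocks. -/
theorem chiral_aux_spectrum_prodMap {H₁ H₂ : Type*} [NormedAddCommGroup H₁] [NormedSpace ℂ H₁]
    [CompleteSpace H₁] [NormedAddCommGroup H₂] [NormedSpace ℂ H₂] [CompleteSpace H₂]
    (A : H₁ →L[ℂ] H₁) (B : H₂ →L[ℂ] H₂) :
    spectrum ℂ (A.prodMap B) = spectrum ℂ A ∪ spectrum ℂ B := by
  ext μ
  have key : ∀ (T₁ : H₁ →L[ℂ] H₁) (T₂ : H₂ →L[ℂ] H₂),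
      ⇑(algebraMap ℂ _ μ - T₁.prodMap T₂) =
        Prod.map ⇑(algebraMap ℂ (H₁ →L[ℂ] H₁) μ - T₁) ⇑(algebraMap ℂ (H₂ →L[ℂ] H₂) μ - T₂) := by
    intro T₁ T₂
    funext x
    simp [Algebra.algebraMap_eq_smul_one, Prod.map, Prod.smul_def]
  simp only [spectrum.mem_iff, Set.mem_union, isUnit_iff_bijective, key,
    Prod.map_bijective, not_and_or]

/-- The spectrum is invariant under conjugation by a continuous linear equivalence. -/
theorem chiral_aux_spectrum_conj_equiv {E F : Type*} [NormedAddCommGroup E] [NormedSpace ℂ E]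
    [CompleteSpace E] [NormedAddCommGroup F] [NormedSpace ℂ F] [CompleteSpace F]
    (eL : E ≃L[ℂ] F) (T : E →L[ℂ] E) (P : F →L[ℂ] F)
    (h : ∀ x, T x = eL.symm (P (eL x))) :
    spectrum ℂ T = spectrum ℂ P := by
  ext μ
  have hfun : ⇑(algebraMap ℂ _ μ - T) = ⇑eL.symm ∘ ⇑(algebraMap ℂ (F →L[ℂ] F) μ - P) ∘ ⇑eL := by
    funext x
    simp [h, Algebra.algebraMap_eq_smul_one, map_sub, map_smul]
  simp only [spectrum.mem_iff, isUnit_iff_bijective, hfun, not_iff_not]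
  rw [show ⇑eL.symm = ⇑eL.toEquiv.symm from rfl, show ⇑eL = ⇑eL.toEquiv from rfl,
    ← Function.comp_assoc, Equiv.bijective_comp, Equiv.comp_bijective]

/-- Spectrum of the chiral block Hamiltonian `H(φ₁, φ₂) = (m φ₁ + D† φ₂, D φ₁ - m φ₂)`
on the Hilbert space product `H₁ × H₂`: it is self-adjoint, its square is the
block-diagonal operator `(D†D + m²) ⊕ (DD† + m²)`, and the set of squares of its
spectrum equals `spectrum (D†D) ∪ spectrum (DD†)` shifted by `m²`. -/
theorem chiral_block_hamiltonian_spectrum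
    {H₁ H₂ : Type*} [NormedAddCommGroup H₁] [InnerProductSpace ℂ H₁] [CompleteSpace H₁]
    [NormedAddCommGroup H₂] [InnerProductSpace ℂ H₂] [CompleteSpace H₂]
    (D : H₁ →L[ℂ] H₂) (m : ℝ)
    (Hop : WithLp 2 (H₁ × H₂) →L[ℂ] WithLp 2 (H₁ × H₂))
    (hHop : ∀ φ : WithLp 2 (H₁ × H₂),
      Hop φ = (WithLp.equiv 2 (H₁ × H₂)).symm
        ((m : ℂ) • (WithLp.equiv 2 (H₁ × H₂) φ).1 + adjoint D (WithLp.equiv 2 (H₁ × H₂) φ).2,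
         D (WithLp.equiv 2 (H₁ × H₂) φ).1 - (m : ℂ) • (WithLp.equiv 2 (H₁ × H₂) φ).2)) :
    IsSelfAdjoint Hop ∧
    (∀ φ : WithLp 2 (H₁ × H₂),
      Hop (Hop φ) = (WithLp.equiv 2 (H₁ × H₂)).symm
        (adjoint D (D (WithLp.equiv 2 (H₁ × H₂) φ).1)
            + ((m : ℂ) ^ 2) • (WithLp.equiv 2 (H₁ × H₂) φ).1,
         D (adjoint D (WithLp.equiv 2 (H₁ × H₂) φ).2)
            + ((m : ℂ) ^ 2) • (WithLp.equiv 2 (H₁ × H₂) φ).2)) ∧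
    (fun E : ℂ => E ^ 2) '' spectrum ℂ Hop =
      (fun μ : ℂ => μ + (m : ℂ) ^ 2) ''
        (spectrum ℂ ((adjoint D).comp D) ∪ spectrum ℂ (D.comp (adjoint D))) := by
  have hsa : IsSelfAdjoint Hop := by
    rw [ContinuousLinearMap.isSelfAdjoint_iff_isSymmetric]
    intro x y
    simp only [ContinuousLinearMap.coe_coe, hHop, WithLp.prod_inner_apply,
      WithLp.equiv_apply, WithLp.equiv_symm_apply, WithLp.ofLp_toLp,
      inner_add_left, inner_add_right, inner_sub_left, inner_sub_right,
      inner_smul_left, inner_smul_right, adjoint_inner_left, adjoint_inner_right,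
      Complex.conj_ofReal]
    ring
  have hsq : ∀ φ : WithLp 2 (H₁ × H₂),
      Hop (Hop φ) = (WithLp.equiv 2 (H₁ × H₂)).symm
        (adjoint D (D (WithLp.equiv 2 (H₁ × H₂) φ).1)
            + ((m : ℂ) ^ 2) • (WithLp.equiv 2 (H₁ × H₂) φ).1,
         D (adjoint D (WithLp.equiv 2 (H₁ × H₂) φ).2)
            + ((m : ℂ) ^ 2) • (WithLp.equiv 2 (H₁ × H₂) φ).2) := by
    intro φ
    rw [hHop (Hop φ), hHop φ]
    simp only [Equiv.apply_symm_apply, WithLp.equiv_apply, WithLp.equiv_symm_apply,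
      WithLp.ofLp_toLp, map_add, map_sub, map_smul, smul_add, smul_sub,
      smul_smul, ← sq]
    congr 1
    exact Prod.ext (by abel) (by abel)
  refine ⟨hsa, hsq, ?_⟩
  set A' : H₁ →L[ℂ] H₁ := (adjoint D).comp D + algebraMap ℂ _ ((m : ℂ) ^ 2) with hA'
  set B' : H₂ →L[ℂ] H₂ := D.comp (adjoint D) + algebraMap ℂ _ ((m : ℂ) ^ 2) with hB'
  have hconj : ∀ φ : WithLp 2 (H₁ × H₂), (Hop ^ 2) φ =
      (WithLp.prodContinuousLinearEquiv 2 ℂ H₁ H₂).symm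
        ((A'.prodMap B') (WithLp.prodContinuousLinearEquiv 2 ℂ H₁ H₂ φ)) := by
    intro φ
    rw [pow_two, ContinuousLinearMap.mul_apply, hsq φ]
    simp [hA', hB', Algebra.algebraMap_eq_smul_one, Prod.map, ContinuousLinearMap.add_apply,
      ContinuousLinearMap.smul_apply, ContinuousLinearMap.one_apply, ContinuousLinearMap.comp_apply]
  calc (fun E : ℂ => E ^ 2) '' spectrum ℂ Hop
      = spectrum ℂ (Hop ^ 2) := (spectrum.map_pow_of_pos Hop (by norm_num)).symm
    _ = spectrum ℂ (A'.prodMap B') :=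
        chiral_aux_spectrum_conj_equiv (WithLp.prodContinuousLinearEquiv 2 ℂ H₁ H₂) _ _ hconj
    _ = spectrum ℂ A' ∪ spectrum ℂ B' := chiral_aux_spectrum_prodMap A' B'
    _ = (spectrum ℂ ((adjoint D).comp D) + {(m : ℂ) ^ 2}) ∪
          (spectrum ℂ (D.comp (adjoint D)) + {(m : ℂ) ^ 2}) := by
        rw [hA', hB', ← spectrum.add_singleton_eq, ← spectrum.add_singleton_eq]
    _ = (fun μ : ℂ => μ + (m : ℂ) ^ 2) ''
          (spectrum ℂ ((adjoint D).comp D) ∪ spectrum ℂ (D.comp (adjoint D))) := by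
        rw [Set.image_union, Set.add_singleton, Set.add_singleton]
end

section
/- Two-component estimate for ranges of nearby projections (equation eq:continity in the proof of Proposition 1.10): Let H be a complex Hilbert space with an orthogonal decomposition given by two complementary orthogonal projections π₁ and π₂ (π₁ + π₂ = Id, π₁π₂ = 0, both self-adjoint idempotents). Let P be an orthogonal projection on H whose range is contained in the range of π₁ (equivalently π₂ P = 0), and let Q be a bounded operator with ‖Q − P‖ ≤ c for some 0 ≤ c < 1. Then every φ ∈ H with Qφ = φ satisfies ‖π₂ φ‖ ≤ ( √(c(2 − c)) / (1 − c) ) · ‖π₁ φ‖. -/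
/-- Two-component estimate for ranges of nearby projections (eq:continity in the proof
of Proposition 1.10): if `π₁, π₂` are complementary orthogonal projections, `P` is an
orthogonal projection with range in the range of `π₁` (i.e. `π₂ P = 0`), and `Q` is a
bounded operator with `‖Q - P‖ ≤ c < 1`, then every `φ` with `Q φ = φ` satisfies
`‖π₂ φ‖ ≤ (√(c(2 - c)) / (1 - c)) ‖π₁ φ‖`. -/
theorem two_component_estimate_nearby_projections
    {H : Type*} [NormedAddCommGroup H] [InnerProductSpace ℂ H] [CompleteSpace H]
    (π₁ π₂ P Q : H →L[ℂ] H)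
    (hπ₁sa : IsSelfAdjoint π₁) (hπ₂sa : IsSelfAdjoint π₂)
    (hπ₁idem : IsIdempotentElem π₁) (hπ₂idem : IsIdempotentElem π₂)
    (hsum : π₁ + π₂ = 1) (hprod : π₁ * π₂ = 0)
    (hPsa : IsSelfAdjoint P) (hPidem : IsIdempotentElem P)
    (hran : π₂ * P = 0)
    (c : ℝ) (hc0 : 0 ≤ c) (hc1 : c < 1) (hQP : ‖Q - P‖ ≤ c)
    (φ : H) (hφ : Q φ = φ) :
    ‖π₂ φ‖ ≤ (Real.sqrt (c * (2 - c)) / (1 - c)) * ‖π₁ φ‖ := by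
  -- Pythagoras: for any x, ‖x‖² = ‖π₁ x‖² + ‖π₂ x‖²
  have horth : ∀ x : H, (inner ℂ (π₁ x) (π₂ x) : ℂ) = 0 := by
    intro x
    have h1 : π₁ (π₂ x) = 0 := by
      have := congrArg (fun T : H →L[ℂ] H => T x) hprod
      simpa using this
    have h2 := hπ₁sa.isSymmetric (π₂ x) x
    have h3 : (inner ℂ (π₂ x) (π₁ x) : ℂ) = 0 := by
      simp only [ContinuousLinearMap.coe_coe] at h2
      rw [← h2, h1]; simp
    exact inner_eq_zero_symm.mpr h3
  have hpyth : ∀ x : H, ‖x‖ * ‖x‖ = ‖π₁ x‖ * ‖π₁ x‖ + ‖π₂ x‖ * ‖π₂ x‖ := by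
    intro x
    have hs : π₁ x + π₂ x = x := by
      have := congrArg (fun T : H →L[ℂ] H => T x) hsum
      simpa using this
    calc ‖x‖ * ‖x‖ = ‖π₁ x + π₂ x‖ * ‖π₁ x + π₂ x‖ := by rw [hs]
      _ = ‖π₁ x‖ * ‖π₁ x‖ + ‖π₂ x‖ * ‖π₂ x‖ :=
          norm_add_sq_eq_norm_sq_add_norm_sq_of_inner_eq_zero _ _ (horth x)
  -- π₂ φ = π₂ ((Q - P) φ)
  have hkey : π₂ φ = π₂ ((Q - P) φ) := by
    have hP : π₂ (P φ) = 0 := by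
      have := congrArg (fun T : H →L[ℂ] H => T φ) hran
      simpa using this
    simp [hφ, map_sub, hP]
  -- ‖π₂ φ‖ ≤ c ‖φ‖
  have hc' : ‖π₂ φ‖ ≤ c * ‖φ‖ := by
    rw [hkey]
    have h1 : ‖π₂ ((Q - P) φ)‖ ≤ ‖(Q - P) φ‖ := by
      nlinarith [hpyth ((Q - P) φ), norm_nonneg ((Q - P) φ), norm_nonneg (π₂ ((Q - P) φ)),
        norm_nonneg (π₁ ((Q - P) φ)), mul_self_nonneg (‖π₁ ((Q - P) φ)‖)]
    calc ‖π₂ ((Q - P) φ)‖ ≤ ‖(Q - P) φ‖ := h1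
      _ ≤ ‖Q - P‖ * ‖φ‖ := (Q - P).le_opNorm φ
      _ ≤ c * ‖φ‖ := by gcongr
  -- numeric finish
  set a := ‖π₂ φ‖ with ha
  set b := ‖π₁ φ‖ with hb
  have ha0 : 0 ≤ a := norm_nonneg _
  have hb0 : 0 ≤ b := norm_nonneg _
  have hsq : a * a ≤ c * c * (b * b + a * a) := by
    have := hpyth φ
    nlinarith [hc', mul_self_nonneg (c * ‖φ‖ - a), norm_nonneg φ]
  set s := Real.sqrt (c * (2 - c)) with hsdef
  have hs0 : 0 ≤ s := Real.sqrt_nonneg _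
  have hs2 : s * s = c * (2 - c) := Real.mul_self_sqrt (by nlinarith)
  rw [div_mul_eq_mul_div, le_div_iff₀ (by linarith)]
  -- goal: a * (1 - c) ≤ s * b
  have hX : 0 ≤ c * c * (b * b + a * a) - a * a := by linarith
  have h1c : (0:ℝ) ≤ 1 - c := by linarith
  have hpos : (0:ℝ) < 1 + c := by linarith
  have h5 : 0 ≤ (1 + c) * ((s * s) * (b * b) - (a * (1 - c)) * (a * (1 - c))) := by
    have hid : (1 + c) * ((c * (2 - c)) * (b * b) - (a * (1 - c)) * (a * (1 - c)))
        = (1 - c) * (c * c * (b * b + a * a) - a * a) + 2 * (c * (b * b)) := by ring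
    rw [hs2, hid]
    have := mul_nonneg h1c hX
    have := mul_nonneg hc0 (mul_self_nonneg b)
    linarith
  have h6 : (a * (1 - c)) * (a * (1 - c)) ≤ (s * b) * (s * b) := by nlinarith [h5, hpos]
  have h7 : (a * (1 - c)) ^ 2 ≤ (s * b) ^ 2 := by nlinarith [h6]
  calc a * (1 - c) = Real.sqrt ((a * (1 - c)) ^ 2) :=
        (Real.sqrt_sq (mul_nonneg ha0 h1c)).symm
    _ ≤ Real.sqrt ((s * b) ^ 2) := Real.sqrt_le_sqrt h7
    _ = s * b := Real.sqrt_sq (mul_nonneg hs0 hb0)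
end

section
/- Norm bound for the difference of Riesz projections: Let X be a complex Banach space, A and B bounded linear operators on X, z₀ ∈ ℂ and R > 0 such that every z ∈ ℂ with |z − z₀| = R lies outside the spectra of both A and B, and suppose ‖(z − A)⁻¹‖ ≤ M_A and ‖(z − B)⁻¹‖ ≤ M_B for all such z. Define the Riesz projections P_A := (2πi)⁻¹ ∮_{|z−z₀|=R} (z − A)⁻¹ dz and P_B := (2πi)⁻¹ ∮_{|z−z₀|=R} (z − B)⁻¹ dz. Then ‖P_A − P_B‖ ≤ R · M_A · M_B · ‖A − B‖. -/
open Metric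

lemma ring_inverse_sub_ring_inverse {A : Type*} [Ring A] {u v : A}
    (hu : IsUnit u) (hv : IsUnit v) :
    Ring.inverse u - Ring.inverse v = Ring.inverse u * (v - u) * Ring.inverse v := by
  rw [mul_sub, sub_mul, mul_assoc, Ring.mul_inverse_cancel v hv, mul_one,
    Ring.inverse_mul_cancel u hu, one_mul]

/-- Norm bound for the difference of Riesz projections: if the circle `|z - z₀| = R`
lies in the resolvent sets of `A` and `B` with resolvent norm bounds `M_A`, `M_B`,
then the Riesz projections `P_A, P_B` obtained by integrating the resolvents over
this circle satisfy `‖P_A - P_B‖ ≤ R · M_A · M_B · ‖A - B‖`. -/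
theorem riesz_projection_difference_bound
    {X : Type*} [NormedAddCommGroup X] [NormedSpace ℂ X] [CompleteSpace X]
    (A B : X →L[ℂ] X) (z₀ : ℂ) (R MA MB : ℝ) (hR : 0 < R)
    (hAspec : ∀ z : ℂ, ‖z - z₀‖ = R → z ∉ spectrum ℂ A)
    (hBspec : ∀ z : ℂ, ‖z - z₀‖ = R → z ∉ spectrum ℂ B)
    (hMA : ∀ z : ℂ, ‖z - z₀‖ = R → ‖Ring.inverse (z • (1 : X →L[ℂ] X) - A)‖ ≤ MA)
    (hMB : ∀ z : ℂ, ‖z - z₀‖ = R → ‖Ring.inverse (z • (1 : X →L[ℂ] X) - B)‖ ≤ MB) :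
    ‖(2 * Real.pi * Complex.I)⁻¹ •
        (∮ z in C(z₀, R), Ring.inverse (z • (1 : X →L[ℂ] X) - A)) -
      (2 * Real.pi * Complex.I)⁻¹ •
        (∮ z in C(z₀, R), Ring.inverse (z • (1 : X →L[ℂ] X) - B))‖ ≤
      R * MA * MB * ‖A - B‖ := by
  have halg : ∀ z : ℂ, algebraMap ℂ (X →L[ℂ] X) z = z • (1 : X →L[ℂ] X) := fun z =>
    Algebra.algebraMap_eq_smul_one z
  -- rewrite as resolvents
  have hres : ∀ (T : X →L[ℂ] X) (z : ℂ),
      Ring.inverse (z • (1 : X →L[ℂ] X) - T) = resolvent T z := by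
    intro T z; rw [resolvent, halg]
  -- membership in resolvent sets
  have hmemA : ∀ z ∈ sphere z₀ R, z ∈ resolventSet ℂ A := by
    intro z hz
    exact Set.not_notMem.mp (hAspec z (mem_sphere_iff_norm.mp hz))
  have hmemB : ∀ z ∈ sphere z₀ R, z ∈ resolventSet ℂ B := by
    intro z hz
    exact Set.not_notMem.mp (hBspec z (mem_sphere_iff_norm.mp hz))
  -- circle integrability
  have hcA : CircleIntegrable (fun z => Ring.inverse (z • (1 : X →L[ℂ] X) - A)) z₀ R := by
    apply ContinuousOn.circleIntegrable hR.le
    intro z hz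
    have := (spectrum.hasDerivAt_resolvent (a := A) (hmemA z hz)).continuousAt
    simp only [hres]
    exact this.continuousWithinAt
  have hcB : CircleIntegrable (fun z => Ring.inverse (z • (1 : X →L[ℂ] X) - B)) z₀ R := by
    apply ContinuousOn.circleIntegrable hR.le
    intro z hz
    have := (spectrum.hasDerivAt_resolvent (a := B) (hmemB z hz)).continuousAt
    simp only [hres]
    exact this.continuousWithinAt
  rw [← smul_sub, ← circleIntegral.integral_sub hcA hcB]
  have key : ‖(2 * ↑Real.pi * Complex.I)⁻¹ •
      ∮ z in C(z₀, R), (Ring.inverse (z • (1 : X →L[ℂ] X) - A) -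
        Ring.inverse (z • (1 : X →L[ℂ] X) - B))‖ ≤ R * (MA * MB * ‖A - B‖) := by
    apply circleIntegral.norm_two_pi_i_inv_smul_integral_le_of_norm_le_const hR.le
    intro z hz
    have hzn := mem_sphere_iff_norm.mp hz
    have huA : IsUnit (z • (1 : X →L[ℂ] X) - A) := by
      have := spectrum.mem_resolventSet_iff.mp (hmemA z hz); rwa [halg] at this
    have huB : IsUnit (z • (1 : X →L[ℂ] X) - B) := by
      have := spectrum.mem_resolventSet_iff.mp (hmemB z hz); rwa [halg] at this
    rw [ring_inverse_sub_ring_inverse huA huB]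
    have hsub : (z • (1 : X →L[ℂ] X) - B) - (z • (1 : X →L[ℂ] X) - A) = A - B := by
      abel
    rw [hsub]
    calc ‖Ring.inverse (z • (1 : X →L[ℂ] X) - A) * (A - B) *
          Ring.inverse (z • (1 : X →L[ℂ] X) - B)‖
        ≤ ‖Ring.inverse (z • (1 : X →L[ℂ] X) - A) * (A - B)‖ *
          ‖Ring.inverse (z • (1 : X →L[ℂ] X) - B)‖ := norm_mul_le _ _
      _ ≤ ‖Ring.inverse (z • (1 : X →L[ℂ] X) - A)‖ * ‖A - B‖ *
          ‖Ring.inverse (z • (1 : X →L[ℂ] X) - B)‖ :=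
          mul_le_mul_of_nonneg_right (norm_mul_le _ _) (norm_nonneg _)
      _ ≤ MA * ‖A - B‖ * MB := by
          have h1 := hMA z hzn
          have h2 := hMB z hzn
          exact mul_le_mul
            (mul_le_mul h1 le_rfl (norm_nonneg _) ((norm_nonneg _).trans h1)) h2
            (norm_nonneg _) (mul_nonneg ((norm_nonneg _).trans h1) (norm_nonneg _))
      _ = MA * MB * ‖A - B‖ := by ring
  calc _ ≤ R * (MA * MB * ‖A - B‖) := key
    _ = R * MA * MB * ‖A - B‖ := by ring
end
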